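/- arXiv:2205.07210 — 3 statements merged into one kernel-verified Lean document; each statement's English description precedes it below -/
import Mathlib

section
/- For every real t ≥ 1, the function f(x) = x·(1 + t − log x)^{19/8} is concave on the interval (0, 1]. -/
theorem concave_x_mul_log_pow (t : ℝ) (ht : 1 ≤ t) :
    ConcaveOn ℝ (Set.Ioc (0 : ℝ) 1)
      (fun x : ℝ => x * (1 + t - Real.log x) ^ ((19 : ℝ) / 8)) := by
  set p : ℝ := (19 : ℝ) / 8 with hp
  have hint : interior (Set.Ioc (0 : ℝ) 1) = Set.Ioo (0 : ℝ) 1 := interior_Ioc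
  -- g x = 1 + t - log x ≥ 2 on (0,1]
  have hg2 : ∀ x ∈ Set.Ioc (0 : ℝ) 1, 2 ≤ 1 + t - Real.log x := by
    intro x hx
    have hlog : Real.log x ≤ 0 := Real.log_nonpos hx.1.le hx.2
    linarith
  refine concaveOn_of_hasDerivWithinAt2_nonpos (f' := fun x =>
      (1 + t - Real.log x) ^ p - p * (1 + t - Real.log x) ^ (p - 1))
    (f'' := fun x =>
      -(p * x⁻¹) * (1 + t - Real.log x) ^ (p - 2) * ((1 + t - Real.log x) - (p - 1)))
    (convex_Ioc 0 1) ?_ ?_ ?_ ?_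
  · -- continuity
    refine (continuousOn_id.mul ?_)
    refine ContinuousOn.rpow_const ?_ (fun x hx => Or.inl ?_)
    · exact (continuousOn_const.sub (Real.continuousOn_log.mono
        (fun x hx => ne_of_gt hx.1)))
    · have := hg2 x hx; positivity
  · -- first derivative
    rw [hint]
    intro x hx
    have hx0 : 0 < x := hx.1
    have hg : 2 ≤ 1 + t - Real.log x := hg2 x ⟨hx.1, hx.2.le⟩
    have hgne : 1 + t - Real.log x ≠ 0 := ne_of_gt (by linarith)
    have hG : HasDerivAt (fun x : ℝ => 1 + t - Real.log x) (-x⁻¹) x :=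
      ((hasDerivAt_const x (1 + t)).sub (Real.hasDerivAt_log hx0.ne')).congr_deriv (by ring)
    have hGp : HasDerivAt (fun x : ℝ => (1 + t - Real.log x) ^ p)
        (p * (1 + t - Real.log x) ^ (p - 1) * (-x⁻¹)) x :=
      HasDerivAt.comp (h₂ := fun y => y ^ (p)) x (Real.hasDerivAt_rpow_const (Or.inl hgne)) hG
    have := (hasDerivAt_id x).mul hGp
    convert this.hasDerivWithinAt using 1
    · rfl
    · rfl
    · rfl
    field_simp
    simp only [id]
    ring
  · -- second derivative
    rw [hint]
    intro x hx
    have hx0 : 0 < x := hx.1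
    have hg : 2 ≤ 1 + t - Real.log x := hg2 x ⟨hx.1, hx.2.le⟩
    have hgne : 1 + t - Real.log x ≠ 0 := ne_of_gt (by linarith)
    have hG : HasDerivAt (fun x : ℝ => 1 + t - Real.log x) (-x⁻¹) x :=
      ((hasDerivAt_const x (1 + t)).sub (Real.hasDerivAt_log hx0.ne')).congr_deriv (by ring)
    have h1 : HasDerivAt (fun x : ℝ => (1 + t - Real.log x) ^ p)
        (p * (1 + t - Real.log x) ^ (p - 1) * (-x⁻¹)) x :=
      HasDerivAt.comp (h₂ := fun y => y ^ (p)) x (Real.hasDerivAt_rpow_const (Or.inl hgne)) hG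
    have h2 : HasDerivAt (fun x : ℝ => (1 + t - Real.log x) ^ (p - 1))
        ((p - 1) * (1 + t - Real.log x) ^ (p - 1 - 1) * (-x⁻¹)) x :=
      HasDerivAt.comp (h₂ := fun y => y ^ (p - 1)) x (Real.hasDerivAt_rpow_const (Or.inl hgne)) hG
    have := h1.sub ((hasDerivAt_const x p).mul h2)
    convert this.hasDerivWithinAt using 1
    · rfl
    · rfl
    · rfl
    have hrw : (1 + t - Real.log x) ^ p
        = (1 + t - Real.log x) ^ (p - 1) * (1 + t - Real.log x) := by
      rw [← Real.rpow_add_one hgne]; ring_nf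
    have hrw2 : (1 + t - Real.log x) ^ (p - 1)
        = (1 + t - Real.log x) ^ (p - 2) * (1 + t - Real.log x) := by
      rw [← Real.rpow_add_one hgne]; ring_nf
    have h11 : p - 1 - 1 = p - 2 := by ring
    simp only [h11]
    rw [hrw2]
    ring
  · -- nonpositivity
    rw [hint]
    intro x hx
    have hx0 : 0 < x := hx.1
    have hg : 2 ≤ 1 + t - Real.log x := hg2 x ⟨hx.1, hx.2.le⟩
    have h1 : 0 ≤ p * x⁻¹ := by positivity
    have h2 : (0:ℝ) ≤ (1 + t - Real.log x) ^ (p - 2) := Real.rpow_nonneg (by linarith) _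
    have h3 : 0 ≤ (1 + t - Real.log x) - (p - 1) := by
      rw [hp]; linarith
    nlinarith [mul_nonneg (mul_nonneg h1 h2) h3]
end

section
/- Let n ≥ 1 be an integer and θ : ℕ → ℝ be a nonincreasing function with θ(k) ≥ 0 for all k, θ(m) = 0 for all m > n, and such that for every integer k with 1 ≤ k ≤ n one has θ(⌈k + √k/2⌉) ≥ θ(k) − 2/√k. Then θ(1) ≤ 10·(1 + log n). -/
theorem green_level_iteration (n : ℕ) (hn : 1 ≤ n) (θ : ℕ → ℝ)
    (hmono : Antitone θ) (hnonneg : ∀ k, 0 ≤ θ k)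
    (hzero : ∀ m, n < m → θ m = 0)
    (hstep : ∀ k : ℕ, 1 ≤ k → k ≤ n →
      θ k - 2 / Real.sqrt k ≤ θ ⌈(k : ℝ) + Real.sqrt k / 2⌉₊) :
    θ 1 ≤ 10 * (1 + Real.log n) := by
  have key : ∀ d : ℕ, ∀ k : ℕ, 1 ≤ k → k ≤ n → n - k < d →
      θ k ≤ 6 * (Real.log n - Real.log k) + 2 := by
    intro d
    induction d with
    | zero => intro k _ hkn hd; omega
    | succ d ih =>
      intro k hk1 hkn hd
      set k' := ⌈(k : ℝ) + Real.sqrt k / 2⌉₊ with hk'def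
      have hkpos : (0:ℝ) < k := by exact_mod_cast hk1
      have hsk : (1:ℝ) ≤ Real.sqrt k := by
        rw [show (1:ℝ) = Real.sqrt 1 by simp]
        exact Real.sqrt_le_sqrt (by exact_mod_cast hk1)
      have hskpos : (0:ℝ) < Real.sqrt k := lt_of_lt_of_le one_pos hsk
      have hsq : Real.sqrt k * Real.sqrt k = (k:ℝ) := Real.mul_self_sqrt hkpos.le
      have hceil : (k : ℝ) + Real.sqrt k / 2 ≤ (k' : ℝ) := Nat.le_ceil _
      have hkk' : k < k' := by
        have : (k:ℝ) < (k':ℝ) := by linarith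
        exact_mod_cast this
      -- log k' - log k ≥ 1/(3 √k)
      have hx : (0:ℝ) < 1 / (2 * Real.sqrt k) := by positivity
      have hxle : 1 / (2 * Real.sqrt k) ≤ 1/2 := by
        rw [div_le_div_iff₀ (by positivity) (by norm_num)]
        linarith
      set x : ℝ := 1 / (2 * Real.sqrt k) with hxdef
      have hfac : (k:ℝ) * (1 + x) = (k:ℝ) + Real.sqrt k / 2 := by
        field_simp [hxdef]
        have hx2 : x * (2 * Real.sqrt k) = 1 := by
          rw [hxdef]; exact one_div_mul_cancel (by positivity)
        linear_combination (Real.sqrt k) * hx2 - 2 * x * hsq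
      have hlog1x : x / (1 + x) ≤ Real.log (1 + x) := by
        have h1x : (0:ℝ) < 1 + x := by linarith
        have := Real.log_le_sub_one_of_pos (show (0:ℝ) < 1/(1+x) by positivity)
        have hinv : Real.log (1/(1+x)) = - Real.log (1+x) := by
          rw [one_div, Real.log_inv]
        rw [hinv] at this
        have heq : 1 - 1/(1+x) = x/(1+x) := by field_simp; ring
        linarith
      have hlog1x' : 1 / (3 * Real.sqrt k) ≤ Real.log (1 + x) := by
        have h1x : (0:ℝ) < 1 + x := by linarith
        have h1 : 1 / (3 * Real.sqrt k) ≤ x / (1 + x) := by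
          rw [div_le_div_iff₀ (by positivity) h1x, hxdef]
          have : 1 + 1 / (2 * Real.sqrt k) ≤ 3/2 := by linarith
          calc 1 * (1 + 1 / (2 * Real.sqrt k)) ≤ 3/2 := by linarith
            _ ≤ 1 / (2 * Real.sqrt k) * (3 * Real.sqrt k) := by
                have heq : 1 / (2 * Real.sqrt k) * (3 * Real.sqrt k) = 3/2 := by
                  field_simp
                linarith
        linarith
      have hlogk' : Real.log k + 1 / (3 * Real.sqrt k) ≤ Real.log k' := by
        have h1x : (0:ℝ) < 1 + x := by linarith
        have hle : (k:ℝ) * (1 + x) ≤ (k':ℝ) := by rw [hfac]; exact hceil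
        have hpos : (0:ℝ) < (k:ℝ) * (1 + x) := by positivity
        have := Real.log_le_log hpos hle
        rw [Real.log_mul (ne_of_gt hkpos) (ne_of_gt h1x)] at this
        linarith
      have hstep' := hstep k hk1 hkn
      rw [← hk'def] at hstep'
      have h2div : 2 / Real.sqrt k ≤ 2 := by
        rw [div_le_iff₀ hskpos]; linarith
      by_cases hcase : k' ≤ n
      · have hk'1 : 1 ≤ k' := le_of_lt (lt_of_le_of_lt hk1 hkk')
        have hih := ih k' hk'1 hcase (by omega)
        have h2div' : 2 / Real.sqrt k ≤ 6 * (Real.log k' - Real.log k) := by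
          have : 6 * (1 / (3 * Real.sqrt k)) = 2 / Real.sqrt k := by
            field_simp; ring
          linarith
        linarith
      · have hz : θ k' = 0 := hzero k' (by omega)
        have hlogle : Real.log k ≤ Real.log n := by
          apply Real.log_le_log hkpos
          exact_mod_cast hkn
        have : θ k ≤ 2 / Real.sqrt k := by linarith [hz ▸ hstep']
        linarith
  have h1 := key (n + 1) 1 le_rfl hn (by omega)
  have hlogn : 0 ≤ Real.log n := Real.log_natCast_nonneg n
  simp only [Nat.cast_one, Real.log_one] at h1
  linarith
end

section
/- Let V be a finite set, let a : V × V → ℝ be symmetric with a(x,y) ≥ 0 for all x, y, let I ⊊ V, and let U : V → ℝ satisfy ∑_{y ∈ V} a(x,y)(U(x) − U(y)) ≤ 0 for every x ∈ I. Assume that for every x ∈ I there is a path x = x₀, x₁, …, x_k with a(x_{j}, x_{j+1}) > 0 for all j and x_k ∈ V ∖ I. Then max_{x ∈ V} U(x) = max_{x ∈ V ∖ I} U(x). -/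
theorem discrete_maximum_principle {V : Type*} [Fintype V] [DecidableEq V]
    (a : V → V → ℝ) (hsymm : ∀ x y, a x y = a y x) (hnonneg : ∀ x y, 0 ≤ a x y)
    (I : Finset V) (hI : I ≠ Finset.univ) (U : V → ℝ)
    (hsub : ∀ x ∈ I, ∑ y, a x y * (U x - U y) ≤ 0)
    (hconn : ∀ x ∈ I, ∃ (k : ℕ) (p : ℕ → V), p 0 = x ∧
      (∀ j < k, 0 < a (p j) (p (j + 1))) ∧ p k ∉ I) :
    Finset.univ.sup'
        (Finset.Nonempty.mono (Finset.subset_univ Iᶜ)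
          (Finset.nonempty_iff_ne_empty.mpr (fun h => hI ((Finset.compl_eq_empty_iff I).mp h)))) U =
      Iᶜ.sup'
        (Finset.nonempty_iff_ne_empty.mpr (fun h => hI ((Finset.compl_eq_empty_iff I).mp h))) U := by
  have hne : Iᶜ.Nonempty :=
    Finset.nonempty_iff_ne_empty.mpr (fun h => hI ((Finset.compl_eq_empty_iff I).mp h))
  have hne' : (Finset.univ : Finset V).Nonempty := hne.mono (Finset.subset_univ _)
  set M := Finset.univ.sup' hne' U with hM
  have hle : ∀ y : V, U y ≤ M := fun y => Finset.le_sup' U (Finset.mem_univ y)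
  -- key step : a max point in I transmits maximality along positive conductances
  have key : ∀ x ∈ I, U x = M → ∀ y, 0 < a x y → U y = M := by
    intro x hx hUx y hay
    have hterm : ∀ z ∈ Finset.univ, 0 ≤ a x z * (U x - U z) := by
      intro z _
      exact mul_nonneg (hnonneg x z) (by have := hle z; rw [hUx]; linarith)
    have hsum0 : ∑ z, a x z * (U x - U z) = 0 :=
      le_antisymm (hsub x hx) (Finset.sum_nonneg hterm)
    have := (Finset.sum_eq_zero_iff_of_nonneg hterm).mp hsum0 y (Finset.mem_univ y)
    have h2 : U x - U y = 0 := by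
      rcases mul_eq_zero.mp this with h | h
      · exact absurd h (ne_of_gt hay)
      · exact h
    rw [← hUx]; linarith
  -- find a boundary point attaining M
  obtain ⟨x, -, hx⟩ := Finset.exists_mem_eq_sup' hne' U
  have hbd : ∃ z, z ∉ I ∧ U z = M := by
    by_cases hxI : x ∈ I
    · obtain ⟨k, p, hp0, hpos, hpk⟩ := hconn x hxI
      have step : ∀ j ≤ k, (∃ z, z ∉ I ∧ U z = M) ∨ U (p j) = M := by
        intro j hj
        induction j with
        | zero => right; rw [hp0, ← hx]
        | succ n ih =>
          rcases ih (Nat.le_of_succ_le hj) with h | h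
          · exact Or.inl h
          · by_cases hpn : p n ∈ I
            · exact Or.inr (key (p n) hpn h (p (n + 1)) (hpos n (Nat.lt_of_succ_le hj)))
            · exact Or.inl ⟨p n, hpn, h⟩
      rcases step k le_rfl with h | h
      · exact h
      · exact ⟨p k, hpk, h⟩
    · exact ⟨x, hxI, hx.symm⟩
  obtain ⟨z, hzI, hzM⟩ := hbd
  refine le_antisymm ?_ (Finset.sup'_le _ _ fun y _ => hle y)
  calc M = U z := hzM.symm
    _ ≤ Iᶜ.sup' hne U := Finset.le_sup' U (Finset.mem_compl.mpr hzI)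
end
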